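/- Let d be a natural number. Then, as identities of rational numbers, ∑_{0 < k ≤ d} (k − 2/3) · C_{d−k} + (1/3)·∑_{j=1}^{d+1} j·C_{d,j} = ∑_{1 ≤ j ≤ d+1, j ≡ 1 (mod 3)} j·C_{d,j} − d + 2/3, and this common value also equals ∑_{1 ≤ j ≤ d+1, j ≡ 2 (mod 3)} j·C_{d,j} + 2d − 1/3. -/

import Mathlib

/-- `chi3 a` is the Legendre symbol `(a/3)`: the unique element of `{0, 1, -1}`
congruent to `a` modulo `3`. -/
def chi3 (a : ℤ) : ℤ := if a % 3 = 0 then 0 else if a % 3 = 1 then 1 else -1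

/-- `chooseN a b` is the binomial coefficient `binom(a, b)` with natural upper argument
and integer lower argument; it is `0` when `b < 0` or `b > a`. -/
def chooseN (a : ℕ) (b : ℤ) : ℤ := if 0 ≤ b then (a.choose b.toNat : ℤ) else 0

/-- The generalized Catalan-type numbers
`C_{n,j} = 2·binom(2n, n−j) − binom(2n, n−1−j) − binom(2n, n+1−j)`. -/
def catD (n j : ℕ) : ℤ :=
  2 * chooseN (2 * n) ((n : ℤ) - j) - chooseN (2 * n) ((n : ℤ) - 1 - j)
    - chooseN (2 * n) ((n : ℤ) + 1 - j)

lemma chooseN_nat (a k : ℕ) : chooseN a (k:ℤ) = a.choose k := by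
  simp [chooseN]

lemma catD_eval (n j : ℕ) (h : j + 1 ≤ n) :
    catD n j = 2*((2*n).choose (n-j):ℤ) - (2*n).choose (n-1-j) - (2*n).choose (n+1-j) := by
  unfold catD
  rw [show ((n:ℤ) - ↑j) = ((n-j:ℕ):ℤ) from by omega,
      show ((n:ℤ) - 1 - ↑j) = ((n-1-j:ℕ):ℤ) from by omega,
      show ((n:ℤ) + 1 - ↑j) = ((n+1-j:ℕ):ℤ) from by omega]
  simp [chooseN_nat]

lemma csr (n k : ℕ) : ((n.choose (k+1) : ℚ)) * (k+1) = n.choose k * ((n:ℚ) - k) := by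
  have h := Nat.choose_succ_right_eq n k
  by_cases hk : k ≤ n
  · have : ((n - k : ℕ) : ℚ) = (n:ℚ) - k := by push_cast [hk]; ring
    rw [← this]; exact_mod_cast h
  · rw [Nat.choose_eq_zero_of_lt (by omega), Nat.choose_eq_zero_of_lt (by omega)]
    simp

lemma catD_zero (d : ℕ) : (catD d 0 : ℚ) = 2 * catalan d := by
  cases d with
  | zero => simp [catD, chooseN]
  | succ e =>
    have hMQ : ((e:ℚ)+2) * (catalan (e+1) : ℚ) = ((2*(e+1)).choose (e+1) : ℚ) := by
      have hM : (e+1+1) * catalan (e+1) = (e+1).centralBinom :=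
        succ_mul_catalan_eq_centralBinom (e+1)
      rw [Nat.centralBinom] at hM
      exact_mod_cast hM
    have e0 : catD (e+1) 0 = 2 * ((2*(e+1)).choose (e+1) : ℤ) - ((2*(e+1)).choose e : ℤ)
        - ((2*(e+1)).choose (e+2) : ℤ) := by
      rw [catD_eval (e+1) 0 (by omega)]
      norm_num
    have hsymm : (2*(e+1)).choose (e+2) = (2*(e+1)).choose e := by
      rw [← Nat.choose_symm (by omega)]
      congr 1; omega
    have h1 := csr (2*(e+1)) e
    rw [e0]
    push_cast [hsymm] at h1 ⊢
    apply mul_left_cancel₀ (show ((e:ℚ)+2) ≠ 0 from by positivity)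
    linear_combination (-2:ℚ)*hMQ + 2*h1

lemma catD_one (d : ℕ) :
    (catD d 1 : ℚ) * (((d:ℚ)+1)*((d:ℚ)+2)) = 2*((d:ℚ)-1) * ((2*d).choose d : ℚ) := by
  match d with
  | 0 => simp [catD, chooseN]
  | 1 => simp [catD, chooseN]
  | (e+2) =>
    have e0 : catD (e+2) 1 = 2 * ((2*(e+2)).choose (e+1) : ℤ) - ((2*(e+2)).choose e : ℤ)
        - ((2*(e+2)).choose (e+2) : ℤ) := by
      rw [catD_eval (e+2) 1 (by omega)]
      norm_num [show e+2-1 = e+1 from by omega, show e+2+1-1 = e+2 from by omega,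
        show e+2-1-1 = e from by omega]
    have h1 := csr (2*(e+2)) (e+1)
    have h2 := csr (2*(e+2)) e
    rw [e0]
    push_cast at h1 h2 ⊢
    linear_combination (-(e:ℚ)-7) * h1 + ((e:ℚ)+3) * h2

lemma chooseN_succ (N : ℕ) (b : ℤ) : chooseN (N+1) b = chooseN N (b-1) + chooseN N b := by
  unfold chooseN
  by_cases hb : 0 ≤ b
  · by_cases hb0 : b = 0
    · subst hb0; simp
    · have hb1 : 0 ≤ b - 1 := by omega
      rw [if_pos hb, if_pos hb1, if_pos hb]
      have h : b.toNat = (b-1).toNat + 1 := by omega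
      rw [h]
      push_cast [Nat.choose_succ_succ]
      ring
  · rw [if_neg hb, if_neg (show ¬ (0:ℤ) ≤ b - 1 by omega), if_neg hb]
    simp

lemma catD_succ (d j : ℕ) (hj : 1 ≤ j) :
    catD (d+1) j = catD d (j-1) + 2*catD d j + catD d (j+1) := by
  obtain ⟨k, rfl⟩ : ∃ k, j = k+1 := ⟨j-1, by omega⟩
  have h1 : k + 1 - 1 = k := by omega
  rw [h1]
  unfold catD
  rw [show 2*(d+1) = (2*d+1)+1 from by ring]
  simp only [chooseN_succ]
  push_cast
  ring_nf

lemma catD_big (d j : ℕ) (h : d + 2 ≤ j) : catD d j = 0 := by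
  unfold catD chooseN
  rw [if_neg (by omega), if_neg (by omega), if_neg (by omega)]
  ring

open Finset in
lemma master (g : ℕ → ℚ) (d : ℕ) :
    ∑ i ∈ range (d+1+1), g (i+1) * (catD (d+1) (i+1) : ℚ)
      = g 1 * (catD d 0 : ℚ) - g 0 * (catD d 1 : ℚ)
        + ∑ i ∈ range (d+1), (g (i+2) + 2 * g (i+1) + g i) * (catD d (i+1) : ℚ) := by
  have step : ∀ i, g (i+1) * (catD (d+1) (i+1) : ℚ)
      = g (i+1) * (catD d i : ℚ) + 2 * (g (i+1) * (catD d (i+1) : ℚ))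
        + g (i+1) * (catD d (i+2) : ℚ) := by
    intro i
    rw [show catD (d+1) (i+1) = catD d (i+1-1) + 2*catD d (i+1) + catD d (i+1+1) from
      catD_succ d (i+1) (by omega), show i+1-1 = i from rfl, show i+1+1 = i+2 from rfl]
    push_cast
    ring
  rw [Finset.sum_congr rfl (fun i _ => step i), Finset.sum_add_distrib, Finset.sum_add_distrib]
  have S1 : ∑ i ∈ range (d+1+1), g (i+1) * (catD d i : ℚ)
      = g 1 * (catD d 0 : ℚ) + ∑ i ∈ range (d+1), g (i+2) * (catD d (i+1) : ℚ) := by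
    rw [Finset.sum_range_succ']
    have h : ∀ i ∈ range (d+1), g (i+1+1) * (catD d (i+1) : ℚ) = g (i+2) * (catD d (i+1) : ℚ) :=
      fun i _ => by norm_num
    rw [Finset.sum_congr rfl h]
    norm_num [add_comm]
  have S2 : ∑ i ∈ range (d+1+1), 2 * (g (i+1) * (catD d (i+1) : ℚ))
      = ∑ i ∈ range (d+1), 2 * (g (i+1) * (catD d (i+1) : ℚ)) := by
    rw [Finset.sum_range_succ, catD_big d (d+1+1) (by omega)]
    simp
  have S3 : ∑ i ∈ range (d+1+1), g (i+1) * (catD d (i+2) : ℚ)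
      = ∑ i ∈ range (d+1), g i * (catD d (i+1) : ℚ) - g 0 * (catD d 1 : ℚ) := by
    have h4 : ∑ i ∈ range (d+1+1+1), g i * (catD d (i+1) : ℚ)
        = (∑ i ∈ range (d+1+1), g (i+1) * (catD d (i+1+1) : ℚ)) + g 0 * (catD d 1 : ℚ) := by
      rw [Finset.sum_range_succ']
    have h5 : ∑ i ∈ range (d+1+1+1), g i * (catD d (i+1) : ℚ)
        = ∑ i ∈ range (d+1), g i * (catD d (i+1) : ℚ) := by
      rw [Finset.sum_range_succ, Finset.sum_range_succ,
        catD_big d (d+1+1) (by omega), catD_big d (d+1+1+1) (by omega)]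
      norm_num
    have : ∑ i ∈ range (d+1+1), g (i+1) * (catD d (i+1+1) : ℚ)
        = ∑ i ∈ range (d+1+1), g (i+1) * (catD d (i+2) : ℚ) := by
      apply Finset.sum_congr rfl; intro i _; norm_num
    rw [this] at h4
    linarith [h4, h5]
  have comb : ∑ i ∈ range (d+1), (g (i+2) + 2 * g (i+1) + g i) * (catD d (i+1) : ℚ)
      = ∑ i ∈ range (d+1), g (i+2) * (catD d (i+1) : ℚ)
        + ∑ i ∈ range (d+1), 2 * (g (i+1) * (catD d (i+1) : ℚ))
        + ∑ i ∈ range (d+1), g i * (catD d (i+1) : ℚ) := by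
    rw [← Finset.sum_add_distrib, ← Finset.sum_add_distrib]
    apply Finset.sum_congr rfl
    intro i _
    ring
  rw [S1, S2, S3, comb]
  ring

open Finset

def SS (d : ℕ) : ℚ := ∑ m ∈ Finset.range d, (catalan m : ℚ)
def W (d : ℕ) : ℚ := ∑ m ∈ Finset.range d, ((d:ℚ) - m) * (catalan m : ℚ)
def MM (d : ℕ) : ℚ := ((2*d).choose d : ℚ)
def PP (r d : ℕ) : ℚ :=
  ∑ i ∈ Finset.range (d+1), (if (i+1) % 3 = r then (1:ℚ) else 0) * (catD d (i+1) : ℚ)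
def QQ (r d : ℕ) : ℚ :=
  ∑ i ∈ Finset.range (d+1), (if (i+1) % 3 = r then ((i+1:ℕ):ℚ) else 0) * (catD d (i+1) : ℚ)

lemma PP1_succ (d : ℕ) : PP 1 (d+1) = (catD d 0 : ℚ) + (PP 0 d + 2*PP 1 d + PP 2 d) := by
  have hm : ∑ i ∈ Finset.range (d+1+1), (if (i+1) % 3 = 1 then (1:ℚ) else 0) * (catD (d+1) (i+1) : ℚ)
      = (if (1:ℕ) % 3 = 1 then (1:ℚ) else 0) * (catD d 0 : ℚ)
        - (if (0:ℕ) % 3 = 1 then (1:ℚ) else 0) * (catD d 1 : ℚ)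
        + ∑ i ∈ Finset.range (d+1), ((if (i+2) % 3 = 1 then (1:ℚ) else 0)
            + 2 * (if (i+1) % 3 = 1 then (1:ℚ) else 0)
            + (if i % 3 = 1 then (1:ℚ) else 0)) * (catD d (i+1) : ℚ) :=
    master (fun j => if j % 3 = 1 then (1:ℚ) else 0) d
  have key : ∀ i ∈ Finset.range (d+1),
      ((if (i+2) % 3 = 1 then (1:ℚ) else 0)
        + 2 * (if (i+1) % 3 = 1 then (1:ℚ) else 0)
        + (if i % 3 = 1 then (1:ℚ) else 0)) * (catD d (i+1) : ℚ)
      = (if (i+1) % 3 = 0 then (1:ℚ) else 0) * (catD d (i+1) : ℚ) + 2 * ((if (i+1) % 3 = 1 then (1:ℚ) else 0) * (catD d (i+1) : ℚ)) + (if (i+1) % 3 = 2 then (1:ℚ) else 0) * (catD d (i+1) : ℚ) := by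
    intro i _
    have h3 : i % 3 = 0 ∨ i % 3 = 1 ∨ i % 3 = 2 := by omega
    rcases h3 with h|h|h <;> simp [Nat.add_mod, h] <;> push_cast <;> ring
  unfold PP
  rw [hm, Finset.sum_congr rfl key]
  simp only [Finset.sum_add_distrib, Finset.sum_sub_distrib, ← Finset.mul_sum]
  norm_num

lemma PP2_succ (d : ℕ) : PP 2 (d+1) = (PP 1 d + 2*PP 2 d + PP 0 d) := by
  have hm : ∑ i ∈ Finset.range (d+1+1), (if (i+1) % 3 = 2 then (1:ℚ) else 0) * (catD (d+1) (i+1) : ℚ)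
      = (if (1:ℕ) % 3 = 2 then (1:ℚ) else 0) * (catD d 0 : ℚ)
        - (if (0:ℕ) % 3 = 2 then (1:ℚ) else 0) * (catD d 1 : ℚ)
        + ∑ i ∈ Finset.range (d+1), ((if (i+2) % 3 = 2 then (1:ℚ) else 0)
            + 2 * (if (i+1) % 3 = 2 then (1:ℚ) else 0)
            + (if i % 3 = 2 then (1:ℚ) else 0)) * (catD d (i+1) : ℚ) :=
    master (fun j => if j % 3 = 2 then (1:ℚ) else 0) d
  have key : ∀ i ∈ Finset.range (d+1),
      ((if (i+2) % 3 = 2 then (1:ℚ) else 0)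
        + 2 * (if (i+1) % 3 = 2 then (1:ℚ) else 0)
        + (if i % 3 = 2 then (1:ℚ) else 0)) * (catD d (i+1) : ℚ)
      = (if (i+1) % 3 = 1 then (1:ℚ) else 0) * (catD d (i+1) : ℚ) + 2 * ((if (i+1) % 3 = 2 then (1:ℚ) else 0) * (catD d (i+1) : ℚ)) + (if (i+1) % 3 = 0 then (1:ℚ) else 0) * (catD d (i+1) : ℚ) := by
    intro i _
    have h3 : i % 3 = 0 ∨ i % 3 = 1 ∨ i % 3 = 2 := by omega
    rcases h3 with h|h|h <;> simp [Nat.add_mod, h] <;> push_cast <;> ring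
  unfold PP
  rw [hm, Finset.sum_congr rfl key]
  simp only [Finset.sum_add_distrib, Finset.sum_sub_distrib, ← Finset.mul_sum]
  norm_num

lemma PP0_succ (d : ℕ) : PP 0 (d+1) = -(catD d 1 : ℚ) + (PP 2 d + 2*PP 0 d + PP 1 d) := by
  have hm : ∑ i ∈ Finset.range (d+1+1), (if (i+1) % 3 = 0 then (1:ℚ) else 0) * (catD (d+1) (i+1) : ℚ)
      = (if (1:ℕ) % 3 = 0 then (1:ℚ) else 0) * (catD d 0 : ℚ)
        - (if (0:ℕ) % 3 = 0 then (1:ℚ) else 0) * (catD d 1 : ℚ)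
        + ∑ i ∈ Finset.range (d+1), ((if (i+2) % 3 = 0 then (1:ℚ) else 0)
            + 2 * (if (i+1) % 3 = 0 then (1:ℚ) else 0)
            + (if i % 3 = 0 then (1:ℚ) else 0)) * (catD d (i+1) : ℚ) :=
    master (fun j => if j % 3 = 0 then (1:ℚ) else 0) d
  have key : ∀ i ∈ Finset.range (d+1),
      ((if (i+2) % 3 = 0 then (1:ℚ) else 0)
        + 2 * (if (i+1) % 3 = 0 then (1:ℚ) else 0)
        + (if i % 3 = 0 then (1:ℚ) else 0)) * (catD d (i+1) : ℚ)
      = (if (i+1) % 3 = 2 then (1:ℚ) else 0) * (catD d (i+1) : ℚ) + 2 * ((if (i+1) % 3 = 0 then (1:ℚ) else 0) * (catD d (i+1) : ℚ)) + (if (i+1) % 3 = 1 then (1:ℚ) else 0) * (catD d (i+1) : ℚ) := by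
    intro i _
    have h3 : i % 3 = 0 ∨ i % 3 = 1 ∨ i % 3 = 2 := by omega
    rcases h3 with h|h|h <;> simp [Nat.add_mod, h] <;> push_cast <;> ring
  unfold PP
  rw [hm, Finset.sum_congr rfl key]
  simp only [Finset.sum_add_distrib, Finset.sum_sub_distrib, ← Finset.mul_sum]
  norm_num

lemma QQ1_succ (d : ℕ) : QQ 1 (d+1) = (catD d 0 : ℚ) + (QQ 0 d + PP 0 d + 2*QQ 1 d + QQ 2 d - PP 2 d) := by
  have hm : ∑ i ∈ Finset.range (d+1+1), (if (i+1) % 3 = 1 then ((i+1:ℕ):ℚ) else 0) * (catD (d+1) (i+1) : ℚ)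
      = (if (1:ℕ) % 3 = 1 then ((1:ℕ):ℚ) else 0) * (catD d 0 : ℚ)
        - (if (0:ℕ) % 3 = 1 then ((0:ℕ):ℚ) else 0) * (catD d 1 : ℚ)
        + ∑ i ∈ Finset.range (d+1), ((if (i+2) % 3 = 1 then ((i+2:ℕ):ℚ) else 0)
            + 2 * (if (i+1) % 3 = 1 then ((i+1:ℕ):ℚ) else 0)
            + (if i % 3 = 1 then ((i:ℕ):ℚ) else 0)) * (catD d (i+1) : ℚ) :=
    master (fun j => if j % 3 = 1 then (j:ℚ) else 0) d
  have key : ∀ i ∈ Finset.range (d+1),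
      ((if (i+2) % 3 = 1 then ((i+2:ℕ):ℚ) else 0)
        + 2 * (if (i+1) % 3 = 1 then ((i+1:ℕ):ℚ) else 0)
        + (if i % 3 = 1 then ((i:ℕ):ℚ) else 0)) * (catD d (i+1) : ℚ)
      = (if (i+1) % 3 = 0 then ((i+1:ℕ):ℚ) else 0) * (catD d (i+1) : ℚ) + (if (i+1) % 3 = 0 then (1:ℚ) else 0) * (catD d (i+1) : ℚ) + 2 * ((if (i+1) % 3 = 1 then ((i+1:ℕ):ℚ) else 0) * (catD d (i+1) : ℚ)) + (if (i+1) % 3 = 2 then ((i+1:ℕ):ℚ) else 0) * (catD d (i+1) : ℚ) - (if (i+1) % 3 = 2 then (1:ℚ) else 0) * (catD d (i+1) : ℚ) := by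
    intro i _
    have h3 : i % 3 = 0 ∨ i % 3 = 1 ∨ i % 3 = 2 := by omega
    rcases h3 with h|h|h <;> simp [Nat.add_mod, h] <;> push_cast <;> ring
  unfold PP QQ
  rw [hm, Finset.sum_congr rfl key]
  simp only [Finset.sum_add_distrib, Finset.sum_sub_distrib, ← Finset.mul_sum]
  norm_num

lemma QQ2_succ (d : ℕ) : QQ 2 (d+1) = (QQ 1 d + PP 1 d + 2*QQ 2 d + QQ 0 d - PP 0 d) := by
  have hm : ∑ i ∈ Finset.range (d+1+1), (if (i+1) % 3 = 2 then ((i+1:ℕ):ℚ) else 0) * (catD (d+1) (i+1) : ℚ)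
      = (if (1:ℕ) % 3 = 2 then ((1:ℕ):ℚ) else 0) * (catD d 0 : ℚ)
        - (if (0:ℕ) % 3 = 2 then ((0:ℕ):ℚ) else 0) * (catD d 1 : ℚ)
        + ∑ i ∈ Finset.range (d+1), ((if (i+2) % 3 = 2 then ((i+2:ℕ):ℚ) else 0)
            + 2 * (if (i+1) % 3 = 2 then ((i+1:ℕ):ℚ) else 0)
            + (if i % 3 = 2 then ((i:ℕ):ℚ) else 0)) * (catD d (i+1) : ℚ) :=
    master (fun j => if j % 3 = 2 then (j:ℚ) else 0) d
  have key : ∀ i ∈ Finset.range (d+1),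
      ((if (i+2) % 3 = 2 then ((i+2:ℕ):ℚ) else 0)
        + 2 * (if (i+1) % 3 = 2 then ((i+1:ℕ):ℚ) else 0)
        + (if i % 3 = 2 then ((i:ℕ):ℚ) else 0)) * (catD d (i+1) : ℚ)
      = (if (i+1) % 3 = 1 then ((i+1:ℕ):ℚ) else 0) * (catD d (i+1) : ℚ) + (if (i+1) % 3 = 1 then (1:ℚ) else 0) * (catD d (i+1) : ℚ) + 2 * ((if (i+1) % 3 = 2 then ((i+1:ℕ):ℚ) else 0) * (catD d (i+1) : ℚ)) + (if (i+1) % 3 = 0 then ((i+1:ℕ):ℚ) else 0) * (catD d (i+1) : ℚ) - (if (i+1) % 3 = 0 then (1:ℚ) else 0) * (catD d (i+1) : ℚ) := by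
    intro i _
    have h3 : i % 3 = 0 ∨ i % 3 = 1 ∨ i % 3 = 2 := by omega
    rcases h3 with h|h|h <;> simp [Nat.add_mod, h] <;> push_cast <;> ring
  unfold PP QQ
  rw [hm, Finset.sum_congr rfl key]
  simp only [Finset.sum_add_distrib, Finset.sum_sub_distrib, ← Finset.mul_sum]
  norm_num

lemma QQ0_succ (d : ℕ) : QQ 0 (d+1) = (QQ 2 d + PP 2 d + 2*QQ 0 d + QQ 1 d - PP 1 d) := by
  have hm : ∑ i ∈ Finset.range (d+1+1), (if (i+1) % 3 = 0 then ((i+1:ℕ):ℚ) else 0) * (catD (d+1) (i+1) : ℚ)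
      = (if (1:ℕ) % 3 = 0 then ((1:ℕ):ℚ) else 0) * (catD d 0 : ℚ)
        - (if (0:ℕ) % 3 = 0 then ((0:ℕ):ℚ) else 0) * (catD d 1 : ℚ)
        + ∑ i ∈ Finset.range (d+1), ((if (i+2) % 3 = 0 then ((i+2:ℕ):ℚ) else 0)
            + 2 * (if (i+1) % 3 = 0 then ((i+1:ℕ):ℚ) else 0)
            + (if i % 3 = 0 then ((i:ℕ):ℚ) else 0)) * (catD d (i+1) : ℚ) :=
    master (fun j => if j % 3 = 0 then (j:ℚ) else 0) d
  have key : ∀ i ∈ Finset.range (d+1),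
      ((if (i+2) % 3 = 0 then ((i+2:ℕ):ℚ) else 0)
        + 2 * (if (i+1) % 3 = 0 then ((i+1:ℕ):ℚ) else 0)
        + (if i % 3 = 0 then ((i:ℕ):ℚ) else 0)) * (catD d (i+1) : ℚ)
      = (if (i+1) % 3 = 2 then ((i+1:ℕ):ℚ) else 0) * (catD d (i+1) : ℚ) + (if (i+1) % 3 = 2 then (1:ℚ) else 0) * (catD d (i+1) : ℚ) + 2 * ((if (i+1) % 3 = 0 then ((i+1:ℕ):ℚ) else 0) * (catD d (i+1) : ℚ)) + (if (i+1) % 3 = 1 then ((i+1:ℕ):ℚ) else 0) * (catD d (i+1) : ℚ) - (if (i+1) % 3 = 1 then (1:ℚ) else 0) * (catD d (i+1) : ℚ) := by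
    intro i _
    have h3 : i % 3 = 0 ∨ i % 3 = 1 ∨ i % 3 = 2 := by omega
    rcases h3 with h|h|h <;> simp [Nat.add_mod, h] <;> push_cast <;> ring
  unfold PP QQ
  rw [hm, Finset.sum_congr rfl key]
  simp only [Finset.sum_add_distrib, Finset.sum_sub_distrib, ← Finset.mul_sum]
  norm_num


lemma SS_succ (d : ℕ) : SS (d+1) = SS d + catalan d := by
  unfold SS; rw [Finset.sum_range_succ]

lemma W_succ (d : ℕ) : W (d+1) = W d + SS d + catalan d := by
  unfold W SS
  have key : ∀ m ∈ Finset.range (d+1),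
      (((d+1:ℕ):ℚ) - m) * (catalan m : ℚ)
        = ((d:ℚ) - m) * (catalan m : ℚ) + (catalan m : ℚ) := by
    intro m _; push_cast; ring
  rw [Finset.sum_congr rfl key, Finset.sum_add_distrib, Finset.sum_range_succ,
    Finset.sum_range_succ]
  ring

lemma MM_succ (d : ℕ) : ((d:ℚ)+1) * MM (d+1) = (4*(d:ℚ)+2) * MM d := by
  have h := Nat.succ_mul_centralBinom_succ d
  rw [Nat.centralBinom, Nat.centralBinom] at h
  have h2 : ((d+1) * ((2*(d+1)).choose (d+1)) : ℚ) = ((2 * (2*d+1) * ((2*d).choose d)) : ℚ) := by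
    exact_mod_cast congrArg (Nat.cast : ℕ → ℚ) h
  unfold MM
  push_cast at h2 ⊢
  linarith

lemma cat_MM (d : ℕ) : ((d:ℚ)+1) * (catalan d : ℚ) = MM d := by
  have h := succ_mul_catalan_eq_centralBinom d
  rw [Nat.centralBinom] at h
  unfold MM
  exact_mod_cast congrArg (Nat.cast : ℕ → ℚ) h

lemma key_ind (d : ℕ) :
    PP 0 d = 1 - catalan d ∧ PP 1 d = SS d - 1 ∧ PP 2 d = - SS d ∧
    QQ 0 d = -MM d/3 - 2*W d + (4/3)*SS d + d + 1/3 ∧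
    QQ 1 d = W d - (2/3)*SS d - MM d/3 + d - 2/3 ∧
    QQ 2 d = W d - (2/3)*SS d - MM d/3 - 2*d + 1/3 := by
  induction d with
  | zero =>
    have h1 : catD 0 1 = -1 := by simp [catD, chooseN]
    refine ⟨?_, ?_, ?_, ?_, ?_, ?_⟩ <;>
      simp [PP, QQ, SS, W, MM, h1] <;> norm_num
  | succ d ih =>
    obtain ⟨p0, p1, p2, q0, q1, q2⟩ := ih
    have hd1 : ((d:ℚ)+1) ≠ 0 := by positivity
    have hd2 : ((d:ℚ)+2) ≠ 0 := by positivity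
    have ecat : (catalan d : ℚ) = MM d / ((d:ℚ)+1) := by
      rw [eq_div_iff hd1]; linear_combination cat_MM d
    have eM1 : MM (d+1) = (4*(d:ℚ)+2) * MM d / ((d:ℚ)+1) := by
      rw [eq_div_iff hd1]; linear_combination MM_succ d
    have ecat1 : (catalan (d+1) : ℚ) = (4*(d:ℚ)+2) * MM d / (((d:ℚ)+1)*((d:ℚ)+2)) := by
      rw [eq_div_iff (by positivity)]
      have h := cat_MM (d+1)
      push_cast at h
      have h2 := MM_succ d
      linear_combination ((d:ℚ)+1) * h + h2
    have ecD1 : (catD d 1 : ℚ) = 2*((d:ℚ)-1)*MM d / (((d:ℚ)+1)*((d:ℚ)+2)) := by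
      rw [eq_div_iff (by positivity)]
      have h := catD_one d
      unfold MM
      linear_combination h
    have ecD0 : (catD d 0 : ℚ) = 2 * (MM d / ((d:ℚ)+1)) := by
      rw [catD_zero, ecat]
    refine ⟨?_, ?_, ?_, ?_, ?_, ?_⟩
    · rw [PP0_succ, p0, p1, p2, ecat, ecat1, ecD1]
      push_cast
      field_simp
      ring
    · rw [PP1_succ, p0, p1, p2, SS_succ, ecat, ecD0]
      push_cast
      field_simp
      ring
    · rw [PP2_succ, p0, p1, p2, SS_succ, ecat]
      push_cast
      ring
    · rw [QQ0_succ, p1, p2, q0, q1, q2, SS_succ, W_succ, eM1, ecat]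
      push_cast
      field_simp
      ring
    · rw [QQ1_succ, p0, p2, q0, q1, q2, SS_succ, W_succ, eM1, ecat, ecD0]
      push_cast
      field_simp
      ring
    · rw [QQ2_succ, p0, p1, q0, q1, q2, SS_succ, W_succ, eM1, ecat]
      push_cast
      field_simp
      ring

lemma icc_to_range (n : ℕ) (h : ℕ → ℚ) :
    ∑ j ∈ Finset.Icc 1 n, h j = ∑ i ∈ Finset.range n, h (i+1) := by
  rw [← Finset.Ico_add_one_right_eq_Icc, Finset.sum_Ico_eq_sum_range]
  simp only [Nat.add_sub_cancel]
  exact Finset.sum_congr rfl fun i _ => by rw [Nat.add_comm]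

lemma first_sum (d : ℕ) :
    ∑ k ∈ Finset.Icc 1 d, ((k : ℚ) - 2/3) * (catalan (d - k) : ℚ)
      = W d - (2/3) * SS d := by
  rw [icc_to_range d (fun k => ((k : ℚ) - 2/3) * (catalan (d - k) : ℚ))]
  rw [← Finset.sum_range_reflect]
  have key : ∀ i ∈ Finset.range d,
      (((d-1-i+1 : ℕ):ℚ) - 2/3) * (catalan (d - (d-1-i+1)) : ℚ)
        = ((d:ℚ) - i) * (catalan i : ℚ) - (2/3) * (catalan i : ℚ) := by
    intro i hi
    rw [Finset.mem_range] at hi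
    rw [show d-1-i+1 = d-i from by omega, show d-(d-i) = i from by omega,
      Nat.cast_sub (by omega)]
    ring
  rw [Finset.sum_congr rfl key, Finset.sum_sub_distrib, ← Finset.mul_sum]
  rfl

lemma second_sum (d : ℕ) :
    ∑ j ∈ Finset.Icc 1 (d+1), (j : ℚ) * (catD d j : ℚ) = QQ 0 d + QQ 1 d + QQ 2 d := by
  rw [icc_to_range (d+1) (fun j => (j : ℚ) * (catD d j : ℚ))]
  have key : ∀ i ∈ Finset.range (d+1),
      ((i+1 : ℕ):ℚ) * (catD d (i+1) : ℚ)
        = (if (i+1) % 3 = 0 then ((i+1:ℕ):ℚ) else 0) * (catD d (i+1) : ℚ)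
          + (if (i+1) % 3 = 1 then ((i+1:ℕ):ℚ) else 0) * (catD d (i+1) : ℚ)
          + (if (i+1) % 3 = 2 then ((i+1:ℕ):ℚ) else 0) * (catD d (i+1) : ℚ) := by
    intro i _
    have h3 : (i+1) % 3 = 0 ∨ (i+1) % 3 = 1 ∨ (i+1) % 3 = 2 := by omega
    rcases h3 with h|h|h <;> simp [h]
  rw [Finset.sum_congr rfl key, Finset.sum_add_distrib, Finset.sum_add_distrib]
  rfl

lemma filter_sum (d r : ℕ) :
    ∑ j ∈ (Finset.Icc 1 (d+1)).filter (fun j => j % 3 = r), (j : ℚ) * (catD d j : ℚ)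
      = QQ r d := by
  rw [Finset.sum_filter]
  rw [icc_to_range (d+1) (fun j => if j % 3 = r then (j : ℚ) * (catD d j : ℚ) else 0)]
  apply Finset.sum_congr rfl
  intro i _
  split_ifs with h
  · rfl
  · simp

theorem catalan_weighted_recurrence (d : ℕ) :
    (∑ k ∈ Finset.Icc 1 d, ((k : ℚ) - 2 / 3) * (catalan (d - k) : ℚ)
        + (1 / 3) * ∑ j ∈ Finset.Icc 1 (d + 1), (j : ℚ) * (catD d j : ℚ)
      = (∑ j ∈ (Finset.Icc 1 (d + 1)).filter (fun j => j % 3 = 1),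
            (j : ℚ) * (catD d j : ℚ)) - d + 2 / 3)
    ∧ ∑ k ∈ Finset.Icc 1 d, ((k : ℚ) - 2 / 3) * (catalan (d - k) : ℚ)
        + (1 / 3) * ∑ j ∈ Finset.Icc 1 (d + 1), (j : ℚ) * (catD d j : ℚ)
      = (∑ j ∈ (Finset.Icc 1 (d + 1)).filter (fun j => j % 3 = 2),
            (j : ℚ) * (catD d j : ℚ)) + 2 * d - 1 / 3 := by
  obtain ⟨p0, p1, p2, q0, q1, q2⟩ := key_ind d
  rw [first_sum, second_sum, filter_sum d 1, filter_sum d 2, q0, q1, q2]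
  constructor <;> ring
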